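/- Let σ₀ > 0 and ζ ∈ ℂ with (ζ + conj(ζ))² ≠ 32σ₀ (equivalently (Re ζ)² ≠ 8σ₀). Consider the rational lensing map f : {(z₁,z₂) ∈ ℂ² : z₁ + z₂ ≠ 0} → ℂ² given by f₁(z₁,z₂) = ζ − 4σ₀/(z₁ + z₂), f₂(z₁,z₂) = conj(ζ) − 4σ₀/(z₁ + z₂). Then f has exactly two fixed points q₁, q₂ in ℂ²; at each fixed point q = (z₁,z₂) the complex Jacobian satisfies det(I₂ − Df(q)) = 1 − 8σ₀/(z₁ + z₂)² ≠ 0; and the sum of the complex magnifications equals one: ∑_{i=1}^{2} 1/det(I₂ − Df(qᵢ)) = 1. -/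

import Mathlib

/-- **Complex magnification invariant for the filament lens model** (the paper's Example).
Let `σ₀ > 0` and `ζ ∈ ℂ` with `(ζ + conj ζ)² ≠ 32σ₀`.  The rational lensing map
`f(z₁, z₂) = (ζ − 4σ₀/(z₁+z₂), conj ζ − 4σ₀/(z₁+z₂))` (defined where `z₁+z₂ ≠ 0`)
has exactly two fixed points `q₁ ≠ q₂`; at each fixed point `q` the complex
Jacobian matrix `Df q = (∂fμ/∂zν)(q)` satisfies
`det(I₂ − Df q) = 1 − 8σ₀/(q₁+q₂)² ≠ 0`; and the complex magnifications sum to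
one: `1/det(I₂ − Df q₁) + 1/det(I₂ − Df q₂) = 1`. -/
theorem filament_lens_complex_magnification_invariant
    (σ₀ : ℝ) (hσ : 0 < σ₀) (ζ : ℂ)
    (hζ : (ζ + (starRingEnd ℂ) ζ) ^ 2 ≠ (32 * σ₀ : ℂ))
    (f : ℂ × ℂ → ℂ × ℂ)
    (hf : ∀ z : ℂ × ℂ, z.1 + z.2 ≠ 0 →
      f z = (ζ - 4 * σ₀ / (z.1 + z.2), (starRingEnd ℂ) ζ - 4 * σ₀ / (z.1 + z.2)))
    (Df : ℂ × ℂ → Matrix (Fin 2) (Fin 2) ℂ)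
    (hDf : ∀ q : ℂ × ℂ, Df q =
      !![deriv (fun t => (f (t, q.2)).1) q.1, deriv (fun t => (f (q.1, t)).1) q.2;
         deriv (fun t => (f (t, q.2)).2) q.1, deriv (fun t => (f (q.1, t)).2) q.2]) :
    ∃ q₁ q₂ : ℂ × ℂ, q₁ ≠ q₂ ∧
      {q : ℂ × ℂ | q.1 + q.2 ≠ 0 ∧ f q = q} = {q₁, q₂} ∧
      (∀ q ∈ {q : ℂ × ℂ | q.1 + q.2 ≠ 0 ∧ f q = q},
        Matrix.det (1 - Df q) = 1 - 8 * σ₀ / (q.1 + q.2) ^ 2 ∧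
          Matrix.det (1 - Df q) ≠ 0) ∧
      1 / Matrix.det (1 - Df q₁) + 1 / Matrix.det (1 - Df q₂) = 1 := by
  have hσ0 : (σ₀ : ℂ) ≠ 0 := by
    exact_mod_cast hσ.ne'
  set a : ℂ := ζ + (starRingEnd ℂ) ζ with ha
  clear_value a
  obtain ⟨r, hr⟩ : ∃ r : ℂ, r ^ 2 = a ^ 2 - 32 * σ₀ :=
    IsAlgClosed.exists_pow_nat_eq (a ^ 2 - 32 * σ₀) two_pos
  have hrne : r ≠ 0 := by
    intro h
    apply hζ
    have h0 : (0 : ℂ) = a ^ 2 - 32 * σ₀ := by simpa [h] using hr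
    linear_combination -h0
  obtain ⟨s₁, hs₁def⟩ : ∃ s₁ : ℂ, s₁ = (a + r) / 2 := ⟨_, rfl⟩
  obtain ⟨s₂, hs₂def⟩ : ∃ s₂ : ℂ, s₂ = (a - r) / 2 := ⟨_, rfl⟩
  have hsum : s₁ + s₂ = a := by rw [hs₁def, hs₂def]; ring
  have hprod : s₁ * s₂ = 8 * σ₀ := by
    rw [hs₁def, hs₂def]; linear_combination (-1/4 : ℂ) * hr
  have h8σ : (8 : ℂ) * σ₀ ≠ 0 := by
    intro h; apply hσ0; simpa using h
  have hs₁ne : s₁ ≠ 0 := by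
    intro h; apply h8σ; rw [← hprod, h, zero_mul]
  have hs₂ne : s₂ ≠ 0 := by
    intro h; apply h8σ; rw [← hprod, h, mul_zero]
  have hs₁eq : s₁ ^ 2 = a * s₁ - 8 * σ₀ := by
    rw [hs₁def]; linear_combination (1/4 : ℂ) * hr
  have hs₂eq : s₂ ^ 2 = a * s₂ - 8 * σ₀ := by
    rw [hs₂def]; linear_combination (1/4 : ℂ) * hr
  have hs₁₂ : s₁ ≠ s₂ := by
    intro h
    rw [hs₁def, hs₂def] at h
    have h2 : (2 : ℂ) * r = 0 := by linear_combination 2 * h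
    simp [hrne] at h2
  -- the two fixed points
  obtain ⟨q₁, hq₁def⟩ : ∃ q₁ : ℂ × ℂ,
      q₁ = ((ζ - 4 * σ₀ / s₁, (starRingEnd ℂ) ζ - 4 * σ₀ / s₁) : ℂ × ℂ) := ⟨_, rfl⟩
  obtain ⟨q₂, hq₂def⟩ : ∃ q₂ : ℂ × ℂ,
      q₂ = ((ζ - 4 * σ₀ / s₂, (starRingEnd ℂ) ζ - 4 * σ₀ / s₂) : ℂ × ℂ) := ⟨_, rfl⟩
  have hq₁sum : q₁.1 + q₁.2 = s₁ := by
    rw [hq₁def]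
    show ζ - 4 * σ₀ / s₁ + ((starRingEnd ℂ) ζ - 4 * σ₀ / s₁) = s₁
    field_simp
    linear_combination -hs₁eq - s₁ * ha
  have hq₂sum : q₂.1 + q₂.2 = s₂ := by
    rw [hq₂def]
    show ζ - 4 * σ₀ / s₂ + ((starRingEnd ℂ) ζ - 4 * σ₀ / s₂) = s₂
    field_simp
    linear_combination -hs₂eq - s₂ * ha
  have hq₁ne : q₁.1 + q₁.2 ≠ 0 := hq₁sum ▸ hs₁ne
  have hq₂ne : q₂.1 + q₂.2 ≠ 0 := hq₂sum ▸ hs₂ne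
  have hq₁fix : f q₁ = q₁ := by
    rw [hf q₁ hq₁ne, hq₁sum, hq₁def]
  have hq₂fix : f q₂ = q₂ := by
    rw [hf q₂ hq₂ne, hq₂sum, hq₂def]
  have hq₁₂ : q₁ ≠ q₂ := by
    intro h
    apply hs₁₂
    have h1 : q₁.1 = q₂.1 := by rw [h]
    rw [hq₁def, hq₂def] at h1
    have h1' : ζ - 4 * (σ₀ : ℂ) / s₁ = ζ - 4 * σ₀ / s₂ := h1
    have h2 : 4 * (σ₀ : ℂ) / s₁ = 4 * σ₀ / s₂ := by linear_combination -h1'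
    rw [div_eq_div_iff hs₁ne hs₂ne] at h2
    have h4 : (4 : ℂ) * σ₀ ≠ 0 := by
      intro h4; apply hσ0; simpa using h4
    exact (mul_left_cancel₀ h4 h2).symm
  -- set of fixed points
  have hset : {q : ℂ × ℂ | q.1 + q.2 ≠ 0 ∧ f q = q} = {q₁, q₂} := by
    ext q
    simp only [Set.mem_setOf_eq, Set.mem_insert_iff, Set.mem_singleton_iff]
    constructor
    · rintro ⟨hqne, hqfix⟩
      rw [hf q hqne] at hqfix
      have h1 : ζ - 4 * σ₀ / (q.1 + q.2) = q.1 := congrArg Prod.fst hqfix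
      have h2 : (starRingEnd ℂ) ζ - 4 * σ₀ / (q.1 + q.2) = q.2 := congrArg Prod.snd hqfix
      have hseq : (q.1 + q.2) ^ 2 = a * (q.1 + q.2) - 8 * σ₀ := by
        have h3 : (ζ - 4 * σ₀ / (q.1 + q.2)) + ((starRingEnd ℂ) ζ - 4 * σ₀ / (q.1 + q.2))
            = q.1 + q.2 := by rw [h1, h2]
        field_simp at h3
        linear_combination -h3 - (q.1 + q.2) * ha
      have hfac : ((q.1 + q.2) - s₁) * ((q.1 + q.2) - s₂) = 0 := by
        linear_combination hseq - (q.1 + q.2) * hsum + hprod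
      rcases mul_eq_zero.mp hfac with h | h
      · left
        have hss : q.1 + q.2 = s₁ := by linear_combination h
        rw [hq₁def, Prod.ext_iff]
        exact ⟨by rw [← h1, hss], by rw [← h2, hss]⟩
      · right
        have hss : q.1 + q.2 = s₂ := by linear_combination h
        rw [hq₂def, Prod.ext_iff]
        exact ⟨by rw [← h1, hss], by rw [← h2, hss]⟩
    · rintro (h | h)
      · rw [h]; exact ⟨hq₁ne, hq₁fix⟩
      · rw [h]; exact ⟨hq₂ne, hq₂fix⟩
  -- derivative computation
  have hderiv : ∀ (c w x : ℂ), x + c ≠ 0 →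
      deriv (fun t => w - 4 * (σ₀ : ℂ) / (t + c)) x = 4 * σ₀ / (x + c) ^ 2 := by
    intro c w x hx
    have h1 : HasDerivAt (fun t : ℂ => t + c) 1 x := (hasDerivAt_id x).add_const c
    have h2 : HasDerivAt (fun t : ℂ => (t + c)⁻¹) (-1 / (x + c) ^ 2) x := by
      exact h1.inv hx
    have h4 : HasDerivAt (fun t : ℂ => w - 4 * (σ₀ : ℂ) * (t + c)⁻¹)
        (-(4 * (σ₀ : ℂ) * (-1 / (x + c) ^ 2))) x := (h2.const_mul _).const_sub w
    have h5 : HasDerivAt (fun t : ℂ => w - 4 * (σ₀ : ℂ) / (t + c))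
        (-(4 * (σ₀ : ℂ) * (-1 / (x + c) ^ 2))) x := by
      simpa [div_eq_mul_inv] using h4
    rw [h5.deriv]; ring
  -- Jacobian at any point with nonzero coordinate sum
  have hDfval : ∀ q : ℂ × ℂ, q.1 + q.2 ≠ 0 →
      Df q = !![4 * σ₀ / (q.1 + q.2) ^ 2, 4 * σ₀ / (q.1 + q.2) ^ 2;
                4 * σ₀ / (q.1 + q.2) ^ 2, 4 * σ₀ / (q.1 + q.2) ^ 2] := by
    intro q hq
    have hU1 : ∀ᶠ t in nhds q.1, t + q.2 ≠ 0 :=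
      ((continuous_id.add continuous_const).continuousAt).eventually_ne hq
    have hU2 : ∀ᶠ t in nhds q.2, q.1 + t ≠ 0 :=
      ((continuous_const.add continuous_id).continuousAt).eventually_ne hq
    have h00 : deriv (fun t => (f (t, q.2)).1) q.1 = 4 * σ₀ / (q.1 + q.2) ^ 2 := by
      have hev : (fun t => (f (t, q.2)).1) =ᶠ[nhds q.1] fun t => ζ - 4 * σ₀ / (t + q.2) :=
        hU1.mono fun t ht => by simp [hf (t, q.2) ht]
      rw [hev.deriv_eq, hderiv q.2 ζ q.1 hq]
    have h10 : deriv (fun t => (f (t, q.2)).2) q.1 = 4 * σ₀ / (q.1 + q.2) ^ 2 := by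
      have hev : (fun t => (f (t, q.2)).2) =ᶠ[nhds q.1]
          fun t => (starRingEnd ℂ) ζ - 4 * σ₀ / (t + q.2) :=
        hU1.mono fun t ht => by simp [hf (t, q.2) ht]
      rw [hev.deriv_eq, hderiv q.2 ((starRingEnd ℂ) ζ) q.1 hq]
    have h01 : deriv (fun t => (f (q.1, t)).1) q.2 = 4 * σ₀ / (q.1 + q.2) ^ 2 := by
      have hev : (fun t => (f (q.1, t)).1) =ᶠ[nhds q.2] fun t => ζ - 4 * σ₀ / (t + q.1) :=
        hU2.mono fun t ht => by simp [hf (q.1, t) ht, add_comm]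
      have hq' : q.2 + q.1 ≠ 0 := by rwa [add_comm]
      rw [hev.deriv_eq, hderiv q.1 ζ q.2 hq', add_comm q.2 q.1]
    have h11 : deriv (fun t => (f (q.1, t)).2) q.2 = 4 * σ₀ / (q.1 + q.2) ^ 2 := by
      have hev : (fun t => (f (q.1, t)).2) =ᶠ[nhds q.2]
          fun t => (starRingEnd ℂ) ζ - 4 * σ₀ / (t + q.1) :=
        hU2.mono fun t ht => by simp [hf (q.1, t) ht, add_comm]
      have hq' : q.2 + q.1 ≠ 0 := by rwa [add_comm]
      rw [hev.deriv_eq, hderiv q.1 ((starRingEnd ℂ) ζ) q.2 hq', add_comm q.2 q.1]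
    rw [hDf q, h00, h01, h10, h11]
  -- determinant of 1 - constant matrix
  have hdet2 : ∀ c : ℂ, Matrix.det ((1 : Matrix (Fin 2) (Fin 2) ℂ) - !![c, c; c, c])
      = 1 - 2 * c := by
    intro c
    have h1 : (1 : Matrix (Fin 2) (Fin 2) ℂ) - !![c, c; c, c] = !![1 - c, -c; -c, 1 - c] := by
      ext i j
      fin_cases i <;> fin_cases j <;>
        simp [Matrix.one_apply, Matrix.sub_apply]
    rw [h1, Matrix.det_fin_two_of]; ring
  have hdet : ∀ q : ℂ × ℂ, q.1 + q.2 ≠ 0 →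
      Matrix.det (1 - Df q) = 1 - 8 * σ₀ / (q.1 + q.2) ^ 2 := by
    intro q hq
    rw [hDfval q hq, hdet2]; ring
  -- nonvanishing of the determinant at fixed points, given the quadratic relation
  have hne : ∀ s : ℂ, s ≠ 0 → s ^ 2 = a * s - 8 * σ₀ →
      (1 : ℂ) - 8 * σ₀ / s ^ 2 ≠ 0 := by
    intro s hs hseq h
    apply hζ
    have hs2 : s ^ 2 = 8 * σ₀ := by
      have h' : ((s ^ 2 - 8 * σ₀) : ℂ) / s ^ 2 = 0 := by
        rw [← h]; field_simp
      have := (div_eq_zero_iff.mp h').resolve_right (pow_ne_zero 2 hs)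
      linear_combination this
    have has : a * s = 16 * σ₀ := by linear_combination hs2 - hseq
    have key : (a ^ 2 - 32 * (σ₀ : ℂ)) * (8 * σ₀) = 0 := by
      linear_combination (-(a ^ 2)) * hs2 + (a * s + 16 * (σ₀ : ℂ)) * has
    rcases mul_eq_zero.mp key with hk | hk
    · linear_combination hk
    · exact absurd hk h8σ
  have hD₁ : Matrix.det (1 - Df q₁) = 1 - 8 * σ₀ / s₁ ^ 2 := by
    rw [hdet q₁ hq₁ne, hq₁sum]
  have hD₂ : Matrix.det (1 - Df q₂) = 1 - 8 * σ₀ / s₂ ^ 2 := by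
    rw [hdet q₂ hq₂ne, hq₂sum]
  have hD₁ne : (1 : ℂ) - 8 * σ₀ / s₁ ^ 2 ≠ 0 := hne s₁ hs₁ne hs₁eq
  have hD₂ne : (1 : ℂ) - 8 * σ₀ / s₂ ^ 2 ≠ 0 := hne s₂ hs₂ne hs₂eq
  refine ⟨q₁, q₂, hq₁₂, hset, ?_, ?_⟩
  · intro q hq
    rw [hset] at hq
    rcases hq with h | h
    · rw [h]
      exact ⟨hdet q₁ hq₁ne, by rw [hD₁]; exact hD₁ne⟩
    · rw [Set.mem_singleton_iff] at h
      rw [h]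
      exact ⟨hdet q₂ hq₂ne, by rw [hD₂]; exact hD₂ne⟩
  · rw [hD₁, hD₂]
    have hn₁ : s₁ ^ 2 - 8 * (σ₀ : ℂ) ≠ 0 := by
      intro h
      apply hD₁ne
      rw [sub_eq_zero]
      field_simp
      linear_combination h
    have hn₂ : s₂ ^ 2 - 8 * (σ₀ : ℂ) ≠ 0 := by
      intro h
      apply hD₂ne
      rw [sub_eq_zero]
      field_simp
      linear_combination h
    have e₁ : (1 : ℂ) - 8 * σ₀ / s₁ ^ 2 = (s₁ ^ 2 - 8 * σ₀) / s₁ ^ 2 := by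
      field_simp
    have e₂ : (1 : ℂ) - 8 * σ₀ / s₂ ^ 2 = (s₂ ^ 2 - 8 * σ₀) / s₂ ^ 2 := by
      field_simp
    rw [e₁, e₂, one_div_div, one_div_div]
    rw [div_add_div _ _ hn₁ hn₂, div_eq_one_iff_eq (mul_ne_zero hn₁ hn₂)]
    linear_combination (s₁ * s₂ + 8 * (σ₀ : ℂ)) * hprod
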